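/- Let σ(x) = 1/(1+e^{−x}), and for s ≥ 1 define ψ^s : ℝ → ℝ by ψ^s(x) = σ(s(x + 3/2)) − σ(s(x − 3/2)); for N ∈ ℕ, d ∈ ℕ and m ∈ {0,…,N}^d define φ^s_m : ℝ^d → ℝ by φ^s_m(x) = ∏_{l=1}^d ψ^s(3N(x_l − m_l/N)). Then for every d ∈ ℕ and k ∈ ℕ₀ there exists a constant C = C(k, d) > 0 such that for all N ∈ ℕ, all s ≥ 1, all m ∈ {0,…,N}^d, every multi-index α with |α| ≤ k and every x ∈ ℝ^d, |D^α φ^s_m(x)| ≤ C·N^k·s^k. -/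

import Mathlib

open Polynomial Finset

noncomputable def multiDeriv {d : ℕ} : List (Fin d) → ((Fin d → ℝ) → ℝ) → ((Fin d → ℝ) → ℝ)
  | [], f => f
  | i :: u, f => fun x => fderiv ℝ (multiDeriv u f) x (Pi.single i 1)

noncomputable def sigmoid (x : ℝ) : ℝ := 1 / (1 + Real.exp (-x))

noncomputable def psiSig (s x : ℝ) : ℝ :=
  sigmoid (s * (x + 3 / 2)) - sigmoid (s * (x - 3 / 2))

noncomputable def bump (d N : ℕ) (s : ℝ) (m : Fin d → ℕ) (x : Fin d → ℝ) : ℝ :=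
  ∏ l : Fin d, psiSig s (3 * (N : ℝ) * (x l - (m l : ℝ) / (N : ℝ)))

lemma one_add_exp_pos (x : ℝ) : 0 < 1 + Real.exp (-x) := by positivity

lemma sigmoid_pos (x : ℝ) : 0 < sigmoid x := by
  unfold sigmoid; positivity

lemma sigmoid_le_one (x : ℝ) : sigmoid x ≤ 1 := by
  unfold sigmoid
  rw [div_le_one (one_add_exp_pos x)]
  nlinarith [Real.exp_pos (-x)]

lemma contDiff_sigmoid' : ContDiff ℝ ⊤ sigmoid := by
  apply ContDiff.div contDiff_const
  · exact contDiff_const.add (Real.contDiff_exp.comp contDiff_neg)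
  · intro x; exact (one_add_exp_pos x).ne'

lemma hasDerivAt_sigmoid (x : ℝ) :
    HasDerivAt sigmoid (sigmoid x * (1 - sigmoid x)) x := by
  have h : HasDerivAt (fun y : ℝ => Real.exp (-y)) (Real.exp (-x) * (-1)) x :=
    (Real.hasDerivAt_exp (-x)).comp x ((hasDerivAt_id x).neg)
  have h2 : HasDerivAt (fun y : ℝ => 1 + Real.exp (-y)) (Real.exp (-x) * (-1)) x := by
    exact h.const_add 1
  have h3 : HasDerivAt (fun y : ℝ => (1 + Real.exp (-y))⁻¹)
      (-(Real.exp (-x) * -1) / (1 + Real.exp (-x)) ^ 2) x := h2.inv (one_add_exp_pos x).ne'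
  have hfun : sigmoid = fun y : ℝ => (1 + Real.exp (-y))⁻¹ := by
    funext y; unfold sigmoid; rw [one_div]
  rw [hfun]
  convert h3 using 1
  have hne := (one_add_exp_pos x).ne'
  field_simp
  ring

lemma sigmoid_iteratedDeriv_poly (n : ℕ) :
    ∃ p : ℝ[X], ∀ x, iteratedDeriv n sigmoid x = p.eval (sigmoid x) := by
  induction n with
  | zero => exact ⟨X, fun x => by simp⟩
  | succ n ih =>
    obtain ⟨p, hp⟩ := ih
    refine ⟨p.derivative * (X - X ^ 2), fun x => ?_⟩
    rw [iteratedDeriv_succ]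
    have heq : iteratedDeriv n sigmoid = fun x => p.eval (sigmoid x) := funext hp
    rw [heq]
    have hc : HasDerivAt (fun x => p.eval (sigmoid x))
        (p.derivative.eval (sigmoid x) * (sigmoid x * (1 - sigmoid x))) x :=
      (p.hasDerivAt (sigmoid x)).comp x (hasDerivAt_sigmoid x)
    rw [hc.deriv]
    simp only [eval_mul, eval_sub, eval_X, eval_pow]
    ring

lemma poly_eval_bound (p : ℝ[X]) : ∃ B : ℝ, ∀ t : ℝ, 0 ≤ t → t ≤ 1 → |p.eval t| ≤ B := by
  refine ⟨∑ i ∈ range (p.natDegree + 1), |p.coeff i|, fun t ht0 ht1 => ?_⟩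
  rw [Polynomial.eval_eq_sum_range]
  refine (Finset.abs_sum_le_sum_abs _ _).trans (Finset.sum_le_sum fun i _ => ?_)
  rw [abs_mul]
  have : |t ^ i| ≤ 1 := by
    rw [abs_pow, abs_of_nonneg ht0]
    exact pow_le_one₀ ht0 ht1
  calc |p.coeff i| * |t ^ i| ≤ |p.coeff i| * 1 :=
        mul_le_mul_of_nonneg_left this (abs_nonneg _)
    _ = |p.coeff i| := mul_one _

lemma sigmoid_deriv_bound_single (n : ℕ) :
    ∃ B : ℝ, ∀ x, |iteratedDeriv n sigmoid x| ≤ B := by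
  obtain ⟨p, hp⟩ := sigmoid_iteratedDeriv_poly n
  obtain ⟨B, hB⟩ := poly_eval_bound p
  exact ⟨B, fun x => by rw [hp]; exact hB _ (sigmoid_pos x).le (sigmoid_le_one x)⟩

lemma sigmoid_deriv_bound (k : ℕ) :
    ∃ B : ℝ, 1 ≤ B ∧ ∀ n ≤ k, ∀ x, |iteratedDeriv n sigmoid x| ≤ B := by
  induction k with
  | zero =>
    obtain ⟨B, hB⟩ := sigmoid_deriv_bound_single 0
    refine ⟨max 1 B, le_max_left _ _, fun n hn x => ?_⟩
    interval_cases n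
    exact (hB x).trans (le_max_right _ _)
  | succ k ih =>
    obtain ⟨B, hB1, hB⟩ := ih
    obtain ⟨B', hB'⟩ := sigmoid_deriv_bound_single (k + 1)
    refine ⟨max B B', hB1.trans (le_max_left _ _), fun n hn x => ?_⟩
    rcases eq_or_lt_of_le hn with rfl | h'
    · exact (hB' x).trans (le_max_right _ _)
    · exact (hB n (Nat.lt_succ_iff.mp h') x).trans (le_max_left _ _)

lemma sigmoid_affine_iteratedDeriv (n : ℕ) (a b : ℝ) :
    iteratedDeriv n (fun t => sigmoid (a * t + b)) =
      fun t => a ^ n * iteratedDeriv n sigmoid (a * t + b) := by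
  have hc : ContDiff ℝ (n : ℕ∞) (fun z : ℝ => sigmoid (z + b)) :=
    (contDiff_sigmoid'.comp (contDiff_id.add contDiff_const)).of_le le_top
  funext t
  have h2 : iteratedDeriv n (fun t => sigmoid (a * t + b)) t =
      a ^ n * iteratedDeriv n (fun z => sigmoid (z + b)) (a * t) :=
    congrFun (iteratedDeriv_comp_const_mul hc a) t
  rw [h2, iteratedDeriv_comp_add_const]

lemma contDiff_iteratedDeriv' {f : ℝ → ℝ} (hf : ContDiff ℝ ⊤ f) (n : ℕ) :
    ContDiff ℝ ((⊤ : ℕ∞) : WithTop ℕ∞) (iteratedDeriv n f) := by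
  rw [iteratedDeriv_eq_iterate]
  exact (hf.of_le le_top).iterate_deriv n

lemma one_le_inftyWT : ((⊤ : ℕ∞) : WithTop ℕ∞) ≠ 0 := by
  simp

lemma iteratedDeriv_sub' {f g : ℝ → ℝ} (hf : ContDiff ℝ ⊤ f) (hg : ContDiff ℝ ⊤ g) (n : ℕ) :
    iteratedDeriv n (fun x => f x - g x) =
      fun x => iteratedDeriv n f x - iteratedDeriv n g x := by
  induction n with
  | zero => simp
  | succ n ih =>
    funext x
    rw [iteratedDeriv_succ, ih, iteratedDeriv_succ, iteratedDeriv_succ]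
    exact deriv_sub
      (((contDiff_iteratedDeriv' hf n).differentiable one_le_inftyWT).differentiableAt)
      (((contDiff_iteratedDeriv' hg n).differentiable one_le_inftyWT).differentiableAt)

lemma psi_factor_eq (s NN c : ℝ) :
    (fun t => psiSig s (3 * NN * (t - c))) =
      fun t => sigmoid (3 * NN * s * t + (3 * s / 2 - 3 * NN * s * c))
             - sigmoid (3 * NN * s * t + (-(3 * s / 2) - 3 * NN * s * c)) := by
  funext t
  unfold psiSig
  have e1 : s * (3 * NN * (t - c) + 3 / 2) = 3 * NN * s * t + (3 * s / 2 - 3 * NN * s * c) := by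
    ring
  have e2 : s * (3 * NN * (t - c) - 3 / 2) = 3 * NN * s * t + (-(3 * s / 2) - 3 * NN * s * c) := by
    ring
  rw [e1, e2]

lemma contDiff_sigmoid_affine (a b : ℝ) : ContDiff ℝ ⊤ (fun t : ℝ => sigmoid (a * t + b)) :=
  contDiff_sigmoid'.comp ((contDiff_const.mul contDiff_id).add contDiff_const)

lemma psi_factor_smooth (s NN c : ℝ) :
    ContDiff ℝ ⊤ (fun t => psiSig s (3 * NN * (t - c))) := by
  rw [psi_factor_eq]
  exact (contDiff_sigmoid_affine _ _).sub (contDiff_sigmoid_affine _ _)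

lemma psi_factor_bound {k : ℕ} {B : ℝ} (hB1 : 1 ≤ B)
    (hB : ∀ n ≤ k, ∀ x, |iteratedDeriv n sigmoid x| ≤ B)
    {NN s : ℝ} (hN : 1 ≤ NN) (hs : 1 ≤ s) (c : ℝ) {n : ℕ} (hn : n ≤ k) (t : ℝ) :
    |iteratedDeriv n (fun t => psiSig s (3 * NN * (t - c))) t|
      ≤ (2 * B) * (3 * NN * s) ^ n := by
  have ha : (0:ℝ) ≤ 3 * NN * s := by nlinarith
  rw [psi_factor_eq,
    iteratedDeriv_sub' (contDiff_sigmoid_affine _ _) (contDiff_sigmoid_affine _ _)]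
  simp only [sigmoid_affine_iteratedDeriv]
  rw [← mul_sub, abs_mul, abs_of_nonneg (pow_nonneg ha n)]
  have h1 := hB n hn (3 * NN * s * t + (3 * s / 2 - 3 * NN * s * c))
  have h2 := hB n hn (3 * NN * s * t + (-(3 * s / 2) - 3 * NN * s * c))
  have habs : |iteratedDeriv n sigmoid (3 * NN * s * t + (3 * s / 2 - 3 * NN * s * c)) -
      iteratedDeriv n sigmoid (3 * NN * s * t + (-(3 * s / 2) - 3 * NN * s * c))| ≤ 2 * B := by
    calc _ ≤ _ + _ := abs_sub _ _
      _ ≤ B + B := add_le_add h1 h2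
      _ = 2 * B := by ring
  calc (3 * NN * s) ^ n * |_ - _| ≤ (3 * NN * s) ^ n * (2 * B) :=
        mul_le_mul_of_nonneg_left habs (pow_nonneg ha n)
    _ = (2 * B) * (3 * NN * s) ^ n := by ring

lemma multiDeriv_prod {d : ℕ} (h : Fin d → ℝ → ℝ) (hsm : ∀ l, ContDiff ℝ ⊤ (h l))
    (u : List (Fin d)) :
    multiDeriv u (fun y => ∏ l, h l (y l)) =
      fun x => ∏ l, iteratedDeriv (u.count l) (h l) (x l) := by
  induction u with
  | nil => funext x; simp [multiDeriv]
  | cons i u ih =>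
    funext x
    show fderiv ℝ (multiDeriv u (fun y => ∏ l, h l (y l))) x (Pi.single i 1) = _
    rw [ih]
    set F : Fin d → ℝ → ℝ := fun l => iteratedDeriv (u.count l) (h l) with hFdef
    have hFsm : ∀ l, ContDiff ℝ ((⊤ : ℕ∞) : WithTop ℕ∞) (F l) :=
      fun l => contDiff_iteratedDeriv' (hsm l) _
    have hprod : HasFDerivAt (fun y : Fin d → ℝ => ∏ l, F l (y l))
        (∑ l, (∏ j ∈ Finset.univ.erase l, F j (x j)) •
          ((deriv (F l) (x l)) • ContinuousLinearMap.proj (R := ℝ) (φ := fun _ : Fin d => ℝ) l))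
        x := by
      exact HasFDerivAt.finset_prod (fun l _ =>
        HasDerivAt.comp_hasFDerivAt (h₂ := F l) x
          (((hFsm l).differentiable one_le_inftyWT) (x l)).hasDerivAt
          ((ContinuousLinearMap.proj (R := ℝ) (φ := fun _ : Fin d => ℝ) l).hasFDerivAt))
    rw [hprod.fderiv]
    rw [ContinuousLinearMap.sum_apply]
    simp only [ContinuousLinearMap.smul_apply, ContinuousLinearMap.proj_apply,
      Pi.single_apply, smul_eq_mul, mul_ite, mul_one, mul_zero]
    rw [Finset.sum_ite_eq' Finset.univ i
      (fun l => (∏ j ∈ Finset.univ.erase l, F j (x j)) * deriv (F l) (x l))]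
    rw [if_pos (Finset.mem_univ i)]
    have hcnt : ∀ l : Fin d, (i :: u).count l = u.count l + if i = l then 1 else 0 := by
      intro l; simp [List.count_cons]
    conv_rhs =>
      rw [← Finset.mul_prod_erase Finset.univ
        (fun l => iteratedDeriv ((i :: u).count l) (h l) (x l)) (Finset.mem_univ i)]
    have h1 : iteratedDeriv ((i :: u).count i) (h i) (x i) = deriv (F i) (x i) := by
      rw [hcnt i, if_pos rfl, iteratedDeriv_succ]
    have h2 : ∀ j ∈ Finset.univ.erase i,
        iteratedDeriv ((i :: u).count j) (h j) (x j) = F j (x j) := by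
      intro j hj
      rw [hcnt j, if_neg (Ne.symm (Finset.mem_erase.mp hj).1), add_zero]
    rw [h1, Finset.prod_congr rfl h2]
    ring

lemma sum_count_eq_length {d : ℕ} (u : List (Fin d)) :
    ∑ l : Fin d, u.count l = u.length := by
  induction u with
  | nil => simp
  | cons i u ih =>
    have hcnt : ∀ l : Fin d, (i :: u).count l = u.count l + if i = l then 1 else 0 := by
      intro l; simp [List.count_cons]
    simp only [hcnt, Finset.sum_add_distrib, ih, Finset.sum_ite_eq Finset.univ,
      Finset.mem_univ, if_pos, List.length_cons]

/-- Derivative bounds for the sigmoid bump functions: for every `d` and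
`k` there is `C = C(k,d) > 0` such that for all `N ≥ 1`, `s ≥ 1`, `m ∈ {0,…,N}^d`, every
multi-index `α` with `|α| ≤ k` (a list of directions of length `≤ k`) and every `x ∈ ℝ^d`,
`|D^α φ^s_m(x)| ≤ C N^k s^k`. -/
theorem bump_derivative_bound (d : ℕ) (hd : 0 < d) (k : ℕ) :
    ∃ C : ℝ, 0 < C ∧
      ∀ N : ℕ, 1 ≤ N → ∀ s : ℝ, 1 ≤ s → ∀ m : Fin d → ℕ, (∀ l, m l ≤ N) →
        ∀ u : List (Fin d), u.length ≤ k → ∀ x : Fin d → ℝ,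
          |multiDeriv u (bump d N s m) x| ≤ C * (N : ℝ) ^ k * s ^ k := by
  obtain ⟨B, hB1, hB⟩ := sigmoid_deriv_bound k
  have hBpos : (0:ℝ) < B := lt_of_lt_of_le one_pos hB1
  refine ⟨3 ^ k * (2 * B) ^ d, by positivity, ?_⟩
  intro N hN s hs m hm u hu x
  have hNr : (1:ℝ) ≤ (N:ℝ) := by exact_mod_cast hN
  set h : Fin d → ℝ → ℝ :=
    fun l t => psiSig s (3 * (N:ℝ) * (t - (m l : ℝ) / (N:ℝ))) with hh
  have hsm : ∀ l, ContDiff ℝ ⊤ (h l) := fun l => psi_factor_smooth s (N:ℝ) _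
  have hbump : bump d N s m = fun y => ∏ l, h l (y l) := rfl
  rw [hbump, multiDeriv_prod h hsm u, Finset.abs_prod]
  have ha1 : (1:ℝ) ≤ 3 * (N:ℝ) * s := by nlinarith
  have ha0 : (0:ℝ) ≤ 3 * (N:ℝ) * s := le_trans zero_le_one ha1
  have hstep : ∀ l : Fin d, |iteratedDeriv (u.count l) (h l) (x l)|
      ≤ (2 * B) * (3 * (N:ℝ) * s) ^ (u.count l) := by
    intro l
    exact psi_factor_bound hB1 hB hNr hs _ ((List.count_le_length (a := l)).trans hu) _
  calc ∏ l, |iteratedDeriv (u.count l) (h l) (x l)|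
      ≤ ∏ l : Fin d, (2 * B) * (3 * (N:ℝ) * s) ^ (u.count l) :=
        Finset.prod_le_prod (fun l _ => abs_nonneg _) (fun l _ => hstep l)
    _ = (2 * B) ^ d * (3 * (N:ℝ) * s) ^ (∑ l : Fin d, u.count l) := by
        rw [Finset.prod_mul_distrib, Finset.prod_const, Finset.prod_pow_eq_pow_sum,
          Finset.card_univ, Fintype.card_fin]
    _ ≤ (2 * B) ^ d * (3 * (N:ℝ) * s) ^ k := by
        apply mul_le_mul_of_nonneg_left _ (by positivity)
        exact pow_le_pow_right₀ ha1 ((sum_count_eq_length u).le.trans (by exact_mod_cast hu))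
    _ = 3 ^ k * (2 * B) ^ d * (N:ℝ) ^ k * s ^ k := by
        rw [mul_pow, mul_pow]; ring
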